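/- For every ε ∈ (0,1) and every constant C > 0 there exist an n ≥ 2 and a monotone symmetric norm N on ℝⁿ such that no Orlicz function G satisfies N(x) ≤ ‖x‖_G ≤ C·(log₂ n)^{1−ε}·N(x) for all x ∈ ℝⁿ with nonnegative coordinates. In other words, symmetric norms cannot in general be (log n)^{1−ε}-approximated by Orlicz norms. -/

import Mathlib

noncomputable section

/-- A monotone norm on ℝⁿ: subadditive, absolutely homogeneous, point-separating, and
monotone on the nonnegative orthant. -/
def IsMonotoneNorm {n : ℕ} (N : (Fin n → ℝ) → ℝ) : Prop :=
  (∀ x y, N (x + y) ≤ N x + N y) ∧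
  (∀ (c : ℝ) (x), N (c • x) = |c| * N x) ∧
  (∀ x, N x = 0 → x = 0) ∧
  (∀ x y : Fin n → ℝ, 0 ≤ x → x ≤ y → N x ≤ N y)

/-- A symmetric norm: invariant under permutations of the coordinates. -/
def IsSymmetricNorm {n : ℕ} (N : (Fin n → ℝ) → ℝ) : Prop :=
  ∀ (σ : Equiv.Perm (Fin n)) (x : Fin n → ℝ), N (x ∘ σ) = N x

/-- An Orlicz function: continuous, convex and nondecreasing on `[0,∞)`, with `G 0 = 0` and
`G(t) → ∞` as `t → ∞`. -/
def IsOrliczFunction (G : ℝ → ℝ) : Prop :=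
  ContinuousOn G (Set.Ici 0) ∧ ConvexOn ℝ (Set.Ici 0) G ∧
  MonotoneOn G (Set.Ici 0) ∧ G 0 = 0 ∧
  Filter.Tendsto G Filter.atTop Filter.atTop

/-- The Orlicz norm generated by `G`: `inf {α > 0 : ∑ᵢ G (xᵢ/α) ≤ 1}`. -/
def orliczNorm {n : ℕ} (G : ℝ → ℝ) (x : Fin n → ℝ) : ℝ :=
  sInf {α : ℝ | 0 < α ∧ ∑ i, G (x i / α) ≤ 1}

namespace SymOrliczAux

open Finset

/-- The candidate symmetric norm: `sup_S (∑_{i∈S} |x i|) / |S|^β`. -/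
def NN (β : ℝ) (n : ℕ) (x : Fin n → ℝ) : ℝ :=
  (Finset.univ : Finset (Fin n)).powerset.sup' ⟨∅, Finset.empty_mem_powerset _⟩
    fun S => (∑ i ∈ S, |x i|) / (S.card : ℝ) ^ β

lemma le_NN (β : ℝ) {n : ℕ} (x : Fin n → ℝ) (S : Finset (Fin n)) :
    (∑ i ∈ S, |x i|) / (S.card : ℝ) ^ β ≤ NN β n x := by
  rw [NN]
  exact Finset.le_sup' (fun S : Finset (Fin n) => (∑ i ∈ S, |x i|) / (S.card : ℝ) ^ β)
    (Finset.mem_powerset.mpr (Finset.subset_univ S))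

lemma NN_le (β : ℝ) {n : ℕ} (x : Fin n → ℝ) {c : ℝ}
    (h : ∀ S : Finset (Fin n), (∑ i ∈ S, |x i|) / (S.card : ℝ) ^ β ≤ c) :
    NN β n x ≤ c := by
  rw [NN]
  exact Finset.sup'_le _ _ fun S _ => h S

lemma NN_nonneg (β : ℝ) {n : ℕ} (x : Fin n → ℝ) : 0 ≤ NN β n x := by
  have h := le_NN β x ∅
  simpa using h

lemma abs_le_NN (β : ℝ) {n : ℕ} (x : Fin n → ℝ) (i : Fin n) : |x i| ≤ NN β n x := by
  have h := le_NN β x {i}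
  simpa [Real.one_rpow] using h

lemma NN_isMonotoneNorm (β : ℝ) {n : ℕ} (hn : 0 < n) : IsMonotoneNorm (NN β n) := by
  refine ⟨?_, ?_, ?_, ?_⟩
  · intro x y
    apply NN_le
    intro S
    have h2 : (0:ℝ) ≤ ((S.card : ℝ)) ^ β := Real.rpow_nonneg (Nat.cast_nonneg _) _
    have h1 : (∑ i ∈ S, |(x + y) i|) ≤ (∑ i ∈ S, |x i|) + ∑ i ∈ S, |y i| := by
      rw [← Finset.sum_add_distrib]
      exact Finset.sum_le_sum fun i _ => abs_add_le _ _
    calc (∑ i ∈ S, |(x + y) i|) / (S.card : ℝ) ^ β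
        ≤ ((∑ i ∈ S, |x i|) + ∑ i ∈ S, |y i|) / (S.card : ℝ) ^ β := by
          rw [div_eq_mul_inv, div_eq_mul_inv]
          exact mul_le_mul_of_nonneg_right h1 (inv_nonneg.mpr h2)
      _ = (∑ i ∈ S, |x i|) / (S.card : ℝ) ^ β + (∑ i ∈ S, |y i|) / (S.card : ℝ) ^ β :=
          add_div _ _ _
      _ ≤ NN β n x + NN β n y := add_le_add (le_NN β x S) (le_NN β y S)
  · intro c x
    rw [NN, NN]
    erw [Finset.comp_sup'_eq_sup'_comp _ (fun r : ℝ => |c| * r)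
      (fun a b => mul_max_of_nonneg a b (abs_nonneg c))]
    apply Finset.sup'_congr _ rfl
    intro S _
    simp only [Function.comp, Pi.smul_apply, smul_eq_mul, abs_mul]
    rw [← Finset.mul_sum, mul_div_assoc]
  · intro x hx
    funext i
    have h1 := abs_le_NN β x i
    rw [hx] at h1
    have := abs_nonneg (x i)
    have : |x i| = 0 := le_antisymm h1 this
    simpa using this
  · intro x y hx hxy
    apply NN_le
    intro S
    refine le_trans ?_ (le_NN β y S)
    rw [div_eq_mul_inv, div_eq_mul_inv]
    refine mul_le_mul_of_nonneg_right ?_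
      (inv_nonneg.mpr (Real.rpow_nonneg (Nat.cast_nonneg _) _))
    refine Finset.sum_le_sum fun i _ => ?_
    rw [abs_of_nonneg (hx i), abs_of_nonneg (le_trans (hx i) (hxy i))]
    exact hxy i

lemma NN_comp_le (β : ℝ) {n : ℕ} (x : Fin n → ℝ) (σ : Equiv.Perm (Fin n)) :
    NN β n (x ∘ σ) ≤ NN β n x := by
  classical
  apply NN_le
  intro S
  have h1 : ∑ i ∈ S, |(x ∘ σ) i| = ∑ j ∈ S.image σ, |x j| := by
    rw [Finset.sum_image (fun a _ b _ h => σ.injective h)]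
    rfl
  have h2 : (S.image σ).card = S.card := Finset.card_image_of_injective S σ.injective
  rw [h1, ← h2]
  exact le_NN β x (S.image σ)

lemma NN_isSymmetricNorm (β : ℝ) {n : ℕ} : IsSymmetricNorm (NN β n) := by
  intro σ x
  refine le_antisymm (NN_comp_le β x σ) ?_
  have h := NN_comp_le β (x ∘ σ) σ⁻¹
  have hxx : (x ∘ σ) ∘ (σ⁻¹ : Equiv.Perm (Fin n)) = x := by
    funext i
    simp [Function.comp, Equiv.Perm.inv_def]
  rwa [hxx] at h

/-- Subset sums of an antitone function are bounded by initial-segment sums. -/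
lemma sum_finset_le_sum_range (f : ℕ → ℝ) (hf : ∀ a b : ℕ, a ≤ b → f b ≤ f a) :
    ∀ (k : ℕ) (S : Finset ℕ), S.card = k → ∑ i ∈ S, f i ≤ ∑ j ∈ Finset.range k, f j := by
  intro k
  induction k with
  | zero =>
      intro S hS
      rw [Finset.card_eq_zero] at hS
      subst hS
      simp
  | succ k ih =>
      intro S hS
      have hSne : S.Nonempty := by
        rw [← Finset.card_pos, hS]; omega
      set M := S.max' hSne with hM
      have hMS : M ∈ S := S.max'_mem hSne
      have hcard : (S.erase M).card = k := by
        rw [Finset.card_erase_of_mem hMS, hS]; omega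
      have hsub : S ⊆ Finset.range (M + 1) := by
        intro i hi
        rw [Finset.mem_range]
        exact Nat.lt_succ_of_le (S.le_max' i hi)
      have hkM : k ≤ M := by
        have h := Finset.card_le_card hsub
        rw [hS, Finset.card_range] at h
        omega
      have h1 : ∑ i ∈ S, f i = ∑ i ∈ S.erase M, f i + f M :=
        (Finset.sum_erase_add S f hMS).symm
      rw [h1, Finset.sum_range_succ]
      exact add_le_add (ih _ hcard) (hf k M hkM)

/-- Mean value theorem step: `β (k+1)^{β-1} ≤ (k+1)^β - k^β`. -/
lemma mvt_step {β : ℝ} (hβ0 : 0 < β) (hβ1 : β ≤ 1) (k : ℕ) :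
    β * ((k : ℝ) + 1) ^ (β - 1) ≤ ((k : ℝ) + 1) ^ β - (k : ℝ) ^ β := by
  have hcont : Continuous fun t : ℝ => t ^ β :=
    continuous_iff_continuousAt.mpr fun x => Real.continuousAt_rpow_const x β (Or.inr hβ0.le)
  have h01 : (k : ℝ) < (k : ℝ) + 1 := by linarith
  obtain ⟨c, hc, hslope⟩ := exists_hasDerivAt_eq_slope (fun t => t ^ β)
    (fun t => β * t ^ (β - 1)) h01 hcont.continuousOn
    (fun x hx => Real.hasDerivAt_rpow_const
      (Or.inl (ne_of_gt (lt_of_le_of_lt (Nat.cast_nonneg k) hx.1))))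
  have hc0 : (0:ℝ) < c := lt_of_le_of_lt (Nat.cast_nonneg k) hc.1
  have hden : ((k : ℝ) + 1) - (k : ℝ) = 1 := by ring
  rw [hden, div_one] at hslope
  have hmono : ((k : ℝ) + 1) ^ (β - 1) ≤ c ^ (β - 1) :=
    Real.rpow_le_rpow_of_nonpos hc0 hc.2.le (by linarith)
  calc β * ((k : ℝ) + 1) ^ (β - 1) ≤ β * c ^ (β - 1) :=
        mul_le_mul_of_nonneg_left hmono hβ0.le
    _ = ((k : ℝ) + 1) ^ β - (k : ℝ) ^ β := hslope

lemma sum_rpow_le {β : ℝ} (hβ0 : 0 < β) (hβ1 : β ≤ 1) :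
    ∀ k : ℕ, ∑ j ∈ Finset.range k, ((j : ℝ) + 1) ^ (β - 1) ≤ 2 / β * (k : ℝ) ^ β := by
  intro k
  induction k with
  | zero => simp [Real.zero_rpow (ne_of_gt hβ0)]
  | succ k ih =>
      rw [Finset.sum_range_succ]
      have h := mvt_step hβ0 hβ1 k
      have hpos : (0:ℝ) < ((k : ℝ) + 1) ^ (β - 1) := Real.rpow_pos_of_pos (by positivity) _
      have h2 : 2 * (((k : ℝ) + 1) ^ (β - 1)) ≤ 2 / β * (((k : ℝ) + 1) ^ β - (k : ℝ) ^ β) := by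
        rw [div_mul_eq_mul_div, le_div_iff₀ hβ0]
        nlinarith
      have hcast : ((k + 1 : ℕ) : ℝ) = (k : ℝ) + 1 := by push_cast; ring
      rw [hcast]
      linarith

lemma log_le_harmonic : ∀ m : ℕ, Real.log ((m : ℝ) + 1) ≤ ∑ j ∈ Finset.range m, 1 / ((j : ℝ) + 1) := by
  intro m
  induction m with
  | zero => simp
  | succ m ih =>
      rw [Finset.sum_range_succ]
      have hpos1 : (0:ℝ) < (m : ℝ) + 1 := by positivity
      have hpos2 : (0:ℝ) < (m : ℝ) + 2 := by positivity
      have h1 : Real.log ((m : ℝ) + 2) - Real.log ((m : ℝ) + 1) ≤ 1 / ((m : ℝ) + 1) := by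
        rw [← Real.log_div (ne_of_gt hpos2) (ne_of_gt hpos1)]
        have h2 := Real.log_le_sub_one_of_pos (div_pos hpos2 hpos1)
        have heq : ((m : ℝ) + 2) / ((m : ℝ) + 1) - 1 = 1 / ((m : ℝ) + 1) := by
          field_simp
          norm_num
        linarith
      have hcast : ((m + 1 : ℕ) : ℝ) = (m : ℝ) + 1 := by push_cast; ring
      rw [hcast]
      have : (m : ℝ) + 1 + 1 = (m : ℝ) + 2 := by ring
      rw [this]
      linarith


/-- The key numeric inequality: for large `L`,
`2C/(ε/2) · (L/log 2)^{1-ε} + 1 < (L/2 - 1)^{1-ε/2}`. -/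
lemma num_ineq {ε C : ℝ} (hε0 : 0 < ε) (hε1 : ε < 1) (hC : 0 < C) :
    ∃ L₀ : ℝ, 4 ≤ L₀ ∧ ∀ L : ℝ, L₀ ≤ L →
      2 * C / (ε / 2) * (L / Real.log 2) ^ ((1:ℝ) - ε) + 1 < (L / 2 - 1) ^ ((1:ℝ) - ε / 2) := by
  have hlg : 0 < Real.log 2 := Real.log_pos (by norm_num)
  have hlg1 : Real.log 2 ≤ 1 := by
    have := Real.log_le_sub_one_of_pos (by norm_num : (0:ℝ) < 2)
    linarith
  set c3 := (Real.log 2 / 4) ^ ((1:ℝ) - ε) with hc3def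
  have hc3 : 0 < c3 := Real.rpow_pos_of_pos (by positivity) _
  set D := (2 * C / (ε / 2) + 1) / c3 with hDdef
  set E := (max D 1) ^ ((2:ℝ) / ε) with hEdef
  have hmax1 : (1:ℝ) ≤ max D 1 := le_max_right _ _
  have hmax0 : (0:ℝ) ≤ max D 1 := by linarith
  have hE1 : 1 ≤ E := Real.one_le_rpow hmax1 (by positivity)
  refine ⟨max 4 (4 * (E + 1)), le_max_left _ _, ?_⟩
  intro L hL
  have h4L : 4 ≤ L := le_trans (le_max_left _ _) hL
  have hLE : 4 * (E + 1) ≤ L := le_trans (le_max_right _ _) hL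
  have hL4 : E < L / 4 := by linarith
  have hL4pos : (0:ℝ) < L / 4 := by linarith
  have step2 : max D 1 < (L / 4) ^ (ε / 2) := by
    have h := Real.rpow_lt_rpow (by linarith : (0:ℝ) ≤ E) hL4 (by positivity : (0:ℝ) < ε / 2)
    have hexp : (2:ℝ) / ε * (ε / 2) = 1 := by field_simp
    have hE2 : E ^ (ε / 2) = max D 1 := by
      rw [hEdef, ← Real.rpow_mul hmax0, hexp, Real.rpow_one]
    rw [hE2] at h
    exact h
  have hcd : c3 * D = 2 * C / (ε / 2) + 1 := by
    rw [hDdef, mul_comm]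
    exact div_mul_cancel₀ _ (ne_of_gt hc3)
  have step3 : 2 * C / (ε / 2) + 1 < c3 * (L / 4) ^ (ε / 2) := by
    have h1 : c3 * max D 1 < c3 * (L / 4) ^ (ε / 2) := mul_lt_mul_of_pos_left step2 hc3
    have h2 : 2 * C / (ε / 2) + 1 ≤ c3 * max D 1 := by
      rw [← hcd]
      exact mul_le_mul_of_nonneg_left (le_max_left _ _) hc3.le
    linarith
  have hLlg0 : (0:ℝ) ≤ L / Real.log 2 := div_nonneg (by linarith) hlg.le
  have step5 : (L / 4) ^ ((1:ℝ) - ε) = c3 * (L / Real.log 2) ^ ((1:ℝ) - ε) := by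
    have hsplit : L / 4 = (Real.log 2 / 4) * (L / Real.log 2) := by
      field_simp
    rw [hsplit, Real.mul_rpow (by positivity) hLlg0, hc3def]
  have step4 : (L / 4) ^ ((1:ℝ) - ε / 2) = (L / 4) ^ ((1:ℝ) - ε) * (L / 4) ^ (ε / 2) := by
    rw [← Real.rpow_add hL4pos]
    congr 1
    ring
  have ht1 : 1 ≤ (L / Real.log 2) ^ ((1:ℝ) - ε) := by
    have h1 : (1:ℝ) ≤ L / Real.log 2 := (one_le_div hlg).mpr (by linarith)
    exact Real.one_le_rpow h1 (by linarith)
  have htpos : 0 < (L / Real.log 2) ^ ((1:ℝ) - ε) := lt_of_lt_of_le one_pos ht1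
  have hCb : 0 ≤ 2 * C / (ε / 2) := by positivity
  calc 2 * C / (ε / 2) * (L / Real.log 2) ^ ((1:ℝ) - ε) + 1
      ≤ (2 * C / (ε / 2) + 1) * (L / Real.log 2) ^ ((1:ℝ) - ε) := by nlinarith
    _ < (c3 * (L / 4) ^ (ε / 2)) * (L / Real.log 2) ^ ((1:ℝ) - ε) :=
        mul_lt_mul_of_pos_right step3 htpos
    _ = (L / 4) ^ ((1:ℝ) - ε / 2) := by rw [step4, step5]; ring
    _ ≤ (L / 2 - 1) ^ ((1:ℝ) - ε / 2) :=
        Real.rpow_le_rpow hL4pos.le (by linarith) (by linarith)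

end SymOrliczAux

open SymOrliczAux

set_option maxHeartbeats 1000000 in
/-- There exist monotone symmetric norms that cannot be `C·(log₂ n)^{1−ε}`-approximated by
any Orlicz norm. -/
theorem symmetricNorm_not_orlicz_approx :
    ∀ ε : ℝ, 0 < ε → ε < 1 → ∀ C : ℝ, 0 < C →
      ∃ n : ℕ, 2 ≤ n ∧
        ∃ N : (Fin n → ℝ) → ℝ, IsMonotoneNorm N ∧ IsSymmetricNorm N ∧
          ¬ ∃ G : ℝ → ℝ, IsOrliczFunction G ∧
            ∀ x : Fin n → ℝ, 0 ≤ x →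
              N x ≤ orliczNorm G x ∧
              orliczNorm G x ≤ C * Real.logb 2 n ^ ((1 : ℝ) - ε) * N x := by
  intro ε hε0 hε1 C hC
  set β := ε / 2 with hβdef
  have hβ0 : 0 < β := by rw [hβdef]; linarith
  have hβ1 : β < 1 := by rw [hβdef]; linarith
  have hβ1' : (0:ℝ) < 1 - β := by linarith
  obtain ⟨L₀, hL₀4, hnum⟩ := num_ineq hε0 hε1 hC
  obtain ⟨n, hn2, hL⟩ : ∃ n : ℕ, 2 ≤ n ∧ L₀ ≤ Real.log (n:ℝ) := by
    refine ⟨max 2 ⌈Real.exp L₀⌉₊, le_max_left _ _, ?_⟩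
    have h1 : Real.exp L₀ ≤ (⌈Real.exp L₀⌉₊ : ℝ) := Nat.le_ceil _
    have h2 : (⌈Real.exp L₀⌉₊ : ℝ) ≤ ((max 2 ⌈Real.exp L₀⌉₊ : ℕ) : ℝ) := by
      exact_mod_cast le_max_right 2 ⌈Real.exp L₀⌉₊
    have h3 := Real.log_le_log (Real.exp_pos L₀) (le_trans h1 h2)
    rwa [Real.log_exp] at h3
  have hn0 : 0 < n := by omega
  refine ⟨n, hn2, NN β n, NN_isMonotoneNorm β hn0, NN_isSymmetricNorm β, ?_⟩
  rintro ⟨G, ⟨hGc, hGconv, hGmono, hG0, hGtop⟩, hsand⟩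
  -- basic facts
  have hGnn : ∀ t : ℝ, 0 ≤ t → 0 ≤ G t := by
    intro t ht
    have h := hGmono (Set.mem_Ici.mpr (le_refl (0:ℝ))) (Set.mem_Ici.mpr ht) ht
    rwa [hG0] at h
  set L := Real.log (n:ℝ) with hLdef
  have hL4 : 4 ≤ L := le_trans hL₀4 hL
  have hlg : 0 < Real.log 2 := Real.log_pos (by norm_num)
  -- the flat-vector constraint on G
  have hflat : ∀ k : ℕ, 1 ≤ k → k ≤ n → ∀ t : ℝ, ((k:ℝ)) ^ (β - 1) < t → 1 / (k:ℝ) < G t := by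
    intro k hk1 hkn t ht
    have hkpos : (0:ℝ) < (k:ℝ) := by exact_mod_cast Nat.lt_of_lt_of_le Nat.zero_lt_one hk1
    have htpos : 0 < t := lt_trans (Real.rpow_pos_of_pos hkpos _) ht
    by_contra hcon
    push_neg at hcon
    set y : Fin n → ℝ := fun i => if (i:ℕ) < k then 1 else 0 with hydef
    have hy0 : (0 : Fin n → ℝ) ≤ y := by
      intro i
      by_cases h : (i:ℕ) < k <;> simp [hydef, h]
    obtain ⟨hlow, _⟩ := hsand y hy0
    have hNy : ((k:ℝ)) ^ ((1:ℝ) - β) ≤ NN β n y := by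
      set S : Finset (Fin n) := (Finset.univ : Finset (Fin k)).image (Fin.castLE hkn) with hSdef
      have hinj : Function.Injective (Fin.castLE hkn) := Fin.castLE_injective hkn
      have hcard : S.card = k := by
        rw [hSdef, Finset.card_image_of_injective _ hinj, Finset.card_univ, Fintype.card_fin]
      have hsum : ∑ i ∈ S, |y i| = (k:ℝ) := by
        rw [hSdef, Finset.sum_image (fun a _ b _ h => hinj h)]
        have h1 : ∀ j : Fin k, |y (Fin.castLE hkn j)| = 1 := by
          intro j
          simp [hydef, Fin.coe_castLE, j.isLt]
        rw [Finset.sum_congr rfl fun j _ => h1 j]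
        simp
      have h2 := le_NN β y S
      rw [hsum, hcard] at h2
      rwa [Real.rpow_sub hkpos, Real.rpow_one]
    have hmem : t⁻¹ ∈ {α : ℝ | 0 < α ∧ ∑ i, G (y i / α) ≤ 1} := by
      refine ⟨inv_pos.mpr htpos, ?_⟩
      have hterm : ∀ i : Fin n, G (y i / t⁻¹) = if (i:ℕ) < k then G t else 0 := by
        intro i
        by_cases h : (i:ℕ) < k <;> simp [hydef, h, hG0, one_div, inv_inv]
      rw [Finset.sum_congr rfl fun i _ => hterm i]
      rw [Finset.sum_ite, Finset.sum_const, Finset.sum_const, smul_zero, add_zero]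
      have hcf : (Finset.univ.filter fun i : Fin n => (i:ℕ) < k).card ≤ k := by
        have h1 : ((Finset.univ.filter fun i : Fin n => (i:ℕ) < k).image Fin.val)
            ⊆ Finset.range k := by
          intro a ha
          simp only [Finset.mem_image, Finset.mem_filter] at ha
          obtain ⟨b, hb, rfl⟩ := ha
          exact Finset.mem_range.mpr hb.2
        calc (Finset.univ.filter fun i : Fin n => (i:ℕ) < k).card
            = ((Finset.univ.filter fun i : Fin n => (i:ℕ) < k).image Fin.val).card :=
              (Finset.card_image_of_injective _ Fin.val_injective).symm
          _ ≤ (Finset.range k).card := Finset.card_le_card h1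
          _ = k := Finset.card_range k
      have hGt0 : 0 ≤ G t := hGnn t htpos.le
      calc ((Finset.univ.filter fun i : Fin n => (i:ℕ) < k).card) • G t
          = (((Finset.univ.filter fun i : Fin n => (i:ℕ) < k).card : ℕ) : ℝ) * G t :=
            nsmul_eq_mul _ _
        _ ≤ (k:ℝ) * G t := by
            apply mul_le_mul_of_nonneg_right _ hGt0
            exact_mod_cast hcf
        _ ≤ (k:ℝ) * (1 / (k:ℝ)) := mul_le_mul_of_nonneg_left hcon hkpos.le
        _ = 1 := by field_simp
    have horly : orliczNorm G y ≤ t⁻¹ := by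
      rw [orliczNorm]
      exact csInf_le ⟨0, fun a ha => ha.1.le⟩ hmem
    have hlt : t⁻¹ < ((k:ℝ)) ^ ((1:ℝ) - β) := by
      have h1 : ((k:ℝ)) ^ (β - 1) = (((k:ℝ)) ^ ((1:ℝ) - β))⁻¹ := by
        rw [← Real.rpow_neg hkpos.le]
        congr 1
        ring
      rw [h1] at ht
      have h2 : (0:ℝ) < ((k:ℝ)) ^ ((1:ℝ) - β) := Real.rpow_pos_of_pos hkpos _
      calc t⁻¹ < ((((k:ℝ)) ^ ((1:ℝ) - β))⁻¹)⁻¹ := by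
            apply inv_strictAnti₀ (inv_pos.mpr h2) ht
        _ = ((k:ℝ)) ^ ((1:ℝ) - β) := inv_inv _
    linarith
  -- the test vector
  set z : Fin n → ℝ := fun i => (((i:ℕ):ℝ) + 1) ^ (β - 1) with hzdef
  have hz0 : (0 : Fin n → ℝ) ≤ z := by
    intro i
    have : (0:ℝ) ≤ (((i:ℕ):ℝ) + 1) ^ (β - 1) := by positivity
    simpa [hzdef] using this
  obtain ⟨hzlow, hzup⟩ := hsand z hz0
  have hNz : NN β n z ≤ 2 / β := by
    apply NN_le
    intro S
    rcases Nat.eq_zero_or_pos S.card with h0 | hpos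
    · rw [Finset.card_eq_zero] at h0
      rw [h0]
      simp only [Finset.sum_empty, Finset.card_empty, Nat.cast_zero, zero_div]
      positivity
    · have hcardpos : (0:ℝ) < ((S.card:ℝ)) ^ β :=
        Real.rpow_pos_of_pos (by exact_mod_cast hpos) _
      rw [div_le_iff₀ hcardpos]
      have hcardim : (S.image Fin.val).card = S.card :=
        Finset.card_image_of_injective _ Fin.val_injective
      calc ∑ i ∈ S, |z i|
          = ∑ mv ∈ S.image Fin.val, (((mv:ℕ):ℝ) + 1) ^ (β - 1) := by
            rw [Finset.sum_image (fun a _ b _ h => Fin.val_injective h)]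
            refine Finset.sum_congr rfl fun i _ => ?_
            rw [abs_of_nonneg (hz0 i)]
        _ ≤ ∑ j ∈ Finset.range S.card, ((j:ℝ) + 1) ^ (β - 1) := by
            have hanti : ∀ a b : ℕ, a ≤ b → ((b:ℝ) + 1) ^ (β - 1) ≤ ((a:ℝ) + 1) ^ (β - 1) := by
              intro a b hab
              apply Real.rpow_le_rpow_of_nonpos (by positivity) _ (by linarith)
              have : (a:ℝ) ≤ (b:ℝ) := by exact_mod_cast hab
              linarith
            have h := sum_finset_le_sum_range (fun mv => ((mv:ℝ) + 1) ^ (β - 1)) hanti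
              S.card (S.image Fin.val) hcardim
            exact h
        _ ≤ 2 / β * ((S.card:ℝ)) ^ β := sum_rpow_le hβ0 hβ1.le S.card
  -- constants
  have hKpos : 0 < C * Real.logb 2 (n:ℝ) ^ ((1:ℝ) - ε) := by
    apply mul_pos hC
    apply Real.rpow_pos_of_pos
    rw [Real.logb]
    exact div_pos (by rw [← hLdef]; linarith) hlg
  set A := 2 / β * (C * Real.logb 2 (n:ℝ) ^ ((1:ℝ) - ε)) + 1 with hAdef
  have hApos1 : 0 < 2 / β * (C * Real.logb 2 (n:ℝ) ^ ((1:ℝ) - ε)) := by positivity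
  have hA1 : 1 < A := by rw [hAdef]; linarith
  have hA0 : 0 < A := by linarith
  have horl : orliczNorm G z ≤ 2 / β * (C * Real.logb 2 (n:ℝ) ^ ((1:ℝ) - ε)) := by
    calc orliczNorm G z ≤ C * Real.logb 2 (n:ℝ) ^ ((1:ℝ) - ε) * NN β n z := hzup
      _ ≤ C * Real.logb 2 (n:ℝ) ^ ((1:ℝ) - ε) * (2 / β) :=
          mul_le_mul_of_nonneg_left hNz hKpos.le
      _ = 2 / β * (C * Real.logb 2 (n:ℝ) ^ ((1:ℝ) - ε)) := mul_comm _ _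
  have hz0val : (1:ℝ) ≤ NN β n z := by
    have h := abs_le_NN β z ⟨0, by omega⟩
    have h2 : z ⟨0, by omega⟩ = 1 := by
      simp [hzdef, Real.one_rpow]
    rw [h2] at h
    simpa using h
  have hSznon : {α : ℝ | 0 < α ∧ ∑ i, G (z i / α) ≤ 1}.Nonempty := by
    by_contra hne
    rw [Set.not_nonempty_iff_eq_empty] at hne
    have h0 : orliczNorm G z = 0 := by rw [orliczNorm, hne, Real.sInf_empty]
    rw [h0] at hzlow
    linarith
  have hAmem : A ∈ {α : ℝ | 0 < α ∧ ∑ i, G (z i / α) ≤ 1} := by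
    have hlt : orliczNorm G z < A := by rw [hAdef]; linarith
    rw [orliczNorm] at hlt
    obtain ⟨α₀, hα₀mem, hα₀lt⟩ := (csInf_lt_iff ⟨0, fun a ha => ha.1.le⟩ hSznon).mp hlt
    refine ⟨hA0, ?_⟩
    refine le_trans (Finset.sum_le_sum fun i _ => ?_) hα₀mem.2
    have hα₀pos : 0 < α₀ := hα₀mem.1
    refine hGmono (Set.mem_Ici.mpr (div_nonneg (hz0 i) hA0.le))
      (Set.mem_Ici.mpr (div_nonneg (hz0 i) hα₀pos.le)) ?_
    exact div_le_div_of_nonneg_left (hz0 i) hα₀pos hα₀lt.le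
  -- counting
  set p' := (1:ℝ) / (1 - β) with hpdef
  have hApos : 0 < A ^ p' := Real.rpow_pos_of_pos hA0 _
  obtain ⟨M, hM1, hMgt, hMle⟩ :
      ∃ M : ℕ, 1 ≤ M ∧ A ^ p' < (M:ℝ) ∧ (M:ℝ) ≤ A ^ p' + 1 := by
    refine ⟨⌊A ^ p'⌋₊ + 1, by omega, ?_, ?_⟩
    · push_cast; exact Nat.lt_floor_add_one _
    · push_cast; linarith [Nat.floor_le hApos.le]
  have hMpos : (0:ℝ) < (M:ℝ) := by exact_mod_cast hM1
  obtain ⟨m, hmn, hmod⟩ : ∃ m : ℕ, m ≤ n ∧ M * m + n % M = n :=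
    ⟨n / M, Nat.div_le_self n M, Nat.div_add_mod n M⟩
  have hkey : ∀ i : Fin n, (i:ℕ) < m → 1 / ((M:ℝ) * (((i:ℕ):ℝ) + 1)) < G (z i / A) := by
    intro i hi
    have hki_n : M * ((i:ℕ) + 1) ≤ n := by
      calc M * ((i:ℕ) + 1) ≤ M * m := Nat.mul_le_mul (le_refl M) hi
        _ ≤ n := by omega
    have hki1 : 1 ≤ M * ((i:ℕ) + 1) := by
      have h := Nat.mul_le_mul hM1 (Nat.succ_le_succ (Nat.zero_le (i:ℕ)))
      simpa using h
    have hiR : (0:ℝ) < (((i:ℕ):ℝ) + 1) := by positivity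
    have hlt2 : A ^ p' * ((((i:ℕ):ℝ)) + 1) < ((M * ((i:ℕ) + 1) : ℕ) : ℝ) := by
      push_cast
      exact mul_lt_mul_of_pos_right hMgt hiR
    have hrlt : (((M * ((i:ℕ) + 1) : ℕ)) : ℝ) ^ (β - 1)
        < (A ^ p' * ((((i:ℕ):ℝ)) + 1)) ^ (β - 1) :=
      Real.rpow_lt_rpow_of_neg (by positivity) hlt2 (by linarith)
    have hsplit : (A ^ p' * ((((i:ℕ):ℝ)) + 1)) ^ (β - 1) = z i / A := by
      rw [Real.mul_rpow hApos.le hiR.le, ← Real.rpow_mul hA0.le]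
      have hexp : p' * (β - 1) = -1 := by rw [hpdef]; field_simp; ring
      rw [hexp, Real.rpow_neg_one]
      simp only [hzdef]
      rw [inv_mul_eq_div]
    rw [hsplit] at hrlt
    have h := hflat (M * ((i:ℕ) + 1)) hki1 hki_n (z i / A) hrlt
    have hcast : ((M * ((i:ℕ) + 1) : ℕ) : ℝ) = (M:ℝ) * (((i:ℕ):ℝ) + 1) := by push_cast; ring
    rwa [hcast] at h
  -- sum chain
  have hsum1 : ∑ i : Fin n, G (z i / A) ≤ 1 := hAmem.2
  set T := Finset.univ.filter (fun i : Fin n => (i:ℕ) < m) with hTdef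
  have hsub : ∑ i ∈ T, G (z i / A) ≤ ∑ i : Fin n, G (z i / A) :=
    Finset.sum_le_sum_of_subset_of_nonneg (Finset.filter_subset _ _)
      (fun i _ _ => hGnn _ (div_nonneg (hz0 i) hA0.le))
  set g : ℕ → ℝ := fun j => (1:ℝ) / ((M:ℝ) * ((j:ℝ) + 1)) with hgdef
  have hsum2 : ∑ i ∈ T, g ((i:ℕ)) ≤ ∑ i ∈ T, G (z i / A) := by
    apply Finset.sum_le_sum
    intro i hiT
    rw [hTdef, Finset.mem_filter] at hiT
    exact (hkey i hiT.2).le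
  have hsum3 : ∑ i ∈ T, g ((i:ℕ)) = ∑ j ∈ Finset.range m, g j := by
    rw [hTdef, Finset.sum_filter]
    have e2 := Fin.sum_univ_eq_sum_range (fun j : ℕ => if j < m then g j else 0) n
    have e3 : ∑ i : Fin n, (if (i:ℕ) < m then g ((i:ℕ)) else 0)
        = ∑ i : Fin n, (fun j : ℕ => if j < m then g j else 0) ((i:ℕ)) :=
      Finset.sum_congr rfl fun i _ => rfl
    rw [e3, e2, ← Finset.sum_filter]
    congr 1
    ext j
    simp only [Finset.mem_filter, Finset.mem_range]
    omega
  have hsum4 : ∑ j ∈ Finset.range m, g j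
      = (1 / (M:ℝ)) * ∑ j ∈ Finset.range m, 1 / ((j:ℝ) + 1) := by
    rw [Finset.mul_sum]
    apply Finset.sum_congr rfl
    intro j _
    have hj0 : ((j:ℝ) + 1) ≠ 0 := by positivity
    rw [hgdef]
    field_simp
  have hharm := log_le_harmonic m
  have hlogm : Real.log ((m:ℝ) + 1) ≤ (M:ℝ) := by
    have h1 : (1 / (M:ℝ)) * ∑ j ∈ Finset.range m, 1 / ((j:ℝ) + 1) ≤ 1 := by
      rw [← hsum4, ← hsum3]
      exact le_trans hsum2 (le_trans hsub hsum1)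
    have h2 : ∑ j ∈ Finset.range m, 1 / ((j:ℝ) + 1) ≤ (M:ℝ) := by
      rw [one_div, inv_mul_le_iff₀ hMpos, mul_one] at h1
      exact h1
    linarith
  have hmodlt : n % M < M := Nat.mod_lt n (by omega)
  have hdm : (n:ℝ) < (M:ℝ) * ((m:ℝ) + 1) := by
    have h2 : ((n % M : ℕ):ℝ) < (M:ℝ) := by exact_mod_cast hmodlt
    have h1 : (M:ℝ) * (m:ℝ) + ((n % M : ℕ):ℝ) = (n:ℝ) := by exact_mod_cast hmod
    nlinarith
  have hnRpos : (0:ℝ) < (n:ℝ) := by exact_mod_cast hn0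
  have hlog2' : Real.log ((n:ℝ) / (M:ℝ)) ≤ Real.log ((m:ℝ) + 1) := by
    apply Real.log_le_log (div_pos hnRpos hMpos)
    rw [div_le_iff₀ hMpos]
    nlinarith [hdm]
  have hlogn : L - Real.log (M:ℝ) ≤ Real.log ((m:ℝ) + 1) := by
    rw [hLdef, ← Real.log_div (by positivity) (ne_of_gt hMpos)]
    exact hlog2'
  have hlogM : Real.log (M:ℝ) ≤ (M:ℝ) := by
    have := Real.log_le_sub_one_of_pos hMpos
    linarith
  have hM2 : L / 2 ≤ (M:ℝ) := by linarith
  have h9 : L / 2 - 1 ≤ A ^ p' := by linarith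
  have h10 : (L / 2 - 1) ^ ((1:ℝ) - β) ≤ A := by
    have h1 : (L / 2 - 1) ^ ((1:ℝ) - β) ≤ (A ^ p') ^ ((1:ℝ) - β) :=
      Real.rpow_le_rpow (by linarith) h9 (by linarith)
    have h2 : (A ^ p') ^ ((1:ℝ) - β) = A := by
      rw [← Real.rpow_mul hA0.le]
      have hexp : p' * ((1:ℝ) - β) = 1 := by rw [hpdef]; field_simp
      rw [hexp, Real.rpow_one]
    rw [h2] at h1
    exact h1
  have hnum2 := hnum L hL
  have hAeq : A = 2 * C / (ε / 2) * (L / Real.log 2) ^ ((1:ℝ) - ε) + 1 := by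
    rw [hAdef, Real.logb, ← hLdef, hβdef]
    ring
  rw [hβdef] at h10
  rw [hAeq] at h10
  linarith
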